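/- Pairwise coprimality of distinct root binomials (supporting claim ensuring the hypotheses of the uniqueness lemma hold for the positive roots Δ⁺): if d, d′ ∈ ℕ^N are nonzero and not proportional (i.e. d′ ≠ q·d for every rational number q), then every common divisor of b_d = 1 − X^d and b_{d′} = 1 − X^{d′} in ℤ[x₁,…,x_N] is a unit. (Distinct positive roots of a reduced root system are never proportional, so the binomials 1 − e^{−β}, β ∈ Δ⁺, are pairwise coprime.) -/

import Mathlib

open MvPolynomial

/-- The binomial `b_d = 1 - X^d` in `ℤ[x₁,…,x_N]`. -/
noncomputable def bd {N : ℕ} (d : Fin N → ℕ) : MvPolynomial (Fin N) ℤ :=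
  1 - ∏ i, X i ^ d i

section Auxiliary

variable {N : ℕ}

/-- `1 - X^d` as `1 - monomial dd 1`. -/
lemma bd_eq (d : Fin N → ℕ) :
    bd d = 1 - monomial (Finsupp.equivFunOnFinite.symm d) 1 := by
  unfold bd
  congr 1
  set dd : Fin N →₀ ℕ := Finsupp.equivFunOnFinite.symm d with hdd
  calc ∏ i, (X i : MvPolynomial (Fin N) ℤ) ^ d i
      = ∏ i ∈ Finset.univ, (X i : MvPolynomial (Fin N) ℤ) ^ dd i := rfl
    _ = ∏ i ∈ dd.support, (X i : MvPolynomial (Fin N) ℤ) ^ dd i :=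
        (Finset.prod_subset (Finset.subset_univ _) fun i _ hi => by
          rw [Finsupp.notMem_support_iff.1 hi, pow_zero]).symm
    _ = monomial dd 1 := prod_X_pow_eq_monomial

lemma coeff_bd (d : Fin N → ℕ) (m : Fin N →₀ ℕ) :
    coeff m (bd d) = (if 0 = m then (1:ℤ) else 0)
      - (if Finsupp.equivFunOnFinite.symm d = m then 1 else 0) := by
  rw [bd_eq, coeff_sub, coeff_one, coeff_monomial]

/-- If `d, d'` are nonzero and non-proportional, there is an integer weight `w` with
`⟨w,d⟩ > 0 > ⟨w,d'⟩`. -/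
lemma exists_weight (d d' : Fin N → ℕ) (hd : d ≠ 0) (hd' : d' ≠ 0)
    (hprop : ∀ q : ℚ, (fun i => (d' i : ℚ)) ≠ fun i => q * (d i : ℚ)) :
    ∃ w : Fin N → ℤ, 0 < ∑ i, (d i : ℤ) * w i ∧ ∑ i, (d' i : ℤ) * w i < 0 := by
  have hcross : ∃ i j, (d i : ℤ) * d' j ≠ (d j : ℤ) * d' i := by
    by_contra h
    push_neg at h
    obtain ⟨i0, hi0⟩ : ∃ i0, d i0 ≠ 0 := by
      by_contra h0; push_neg at h0; exact hd (funext h0)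
    apply hprop ((d' i0 : ℚ) / (d i0 : ℚ))
    funext j
    have hj := h i0 j
    have : (d i0 : ℚ) * d' j = (d j : ℚ) * d' i0 := by exact_mod_cast hj
    have hne : (d i0 : ℚ) ≠ 0 := by exact_mod_cast hi0
    field_simp
    linarith [this]
  obtain ⟨i0, j0, hΔ⟩ := hcross
  set Δ : ℤ := (d i0 : ℤ) * d' j0 - (d j0 : ℤ) * d' i0 with hΔdef
  have hΔ0 : Δ ≠ 0 := sub_ne_zero.2 hΔ
  set v : Fin N → ℤ := fun k =>
    (if k = i0 then (d' j0 : ℤ) else 0) - (if k = j0 then (d' i0 : ℤ) else 0) with hv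
  have hsum : ∀ e : Fin N → ℕ, ∑ k, (e k : ℤ) * v k
      = (e i0 : ℤ) * d' j0 - (e j0 : ℤ) * d' i0 := by
    intro e
    simp only [hv, mul_sub, Finset.sum_sub_distrib, mul_ite, mul_zero]
    rw [Finset.sum_ite_eq' Finset.univ i0 (fun k => (e k : ℤ) * d' j0),
        Finset.sum_ite_eq' Finset.univ j0 (fun k => (e k : ℤ) * d' i0)]
    simp
  obtain ⟨u, hu1, hu2⟩ : ∃ u : Fin N → ℤ,
      1 ≤ ∑ k, (d k : ℤ) * u k ∧ ∑ k, (d' k : ℤ) * u k = 0 := by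
    rcases lt_or_gt_of_ne hΔ0 with hneg | hpos
    · refine ⟨fun k => -v k, ?_, ?_⟩
      · simp only [mul_neg, Finset.sum_neg_distrib, hsum d]
        omega
      · simp only [mul_neg, Finset.sum_neg_distrib, hsum d']
        ring_nf
    · refine ⟨v, ?_, ?_⟩
      · rw [hsum d]; omega
      · rw [hsum d']; ring
  set B : ℤ := ∑ k, (d k : ℤ) * d' k with hB
  have hBnn : 0 ≤ B := Finset.sum_nonneg fun k _ => by positivity
  have hApos : 0 < ∑ k, (d' k : ℤ) * d' k := by
    obtain ⟨j, hj⟩ : ∃ j, d' j ≠ 0 := by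
      by_contra h0; push_neg at h0; exact hd' (funext h0)
    refine Finset.sum_pos' (fun k _ => by positivity) ⟨j, Finset.mem_univ j, ?_⟩
    have : (0:ℤ) < d' j := by exact_mod_cast Nat.pos_of_ne_zero hj
    positivity
  refine ⟨fun k => (B + 1) * u k - d' k, ?_, ?_⟩
  · have hexp : ∑ k, (d k : ℤ) * ((B + 1) * u k - d' k)
        = (B + 1) * (∑ k, (d k : ℤ) * u k) - B := by
      rw [hB, Finset.mul_sum, ← Finset.sum_sub_distrib]
      congr 1; funext k; ring
    rw [hexp]
    nlinarith
  · have hexp : ∑ k, (d' k : ℤ) * ((B + 1) * u k - d' k)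
        = (B + 1) * (∑ k, (d' k : ℤ) * u k) - ∑ k, (d' k : ℤ) * d' k := by
      rw [Finset.mul_sum, ← Finset.sum_sub_distrib]
      congr 1; funext k; ring
    rw [hexp, hu2]
    omega

/-- The value type of the monomial ordering: weight first, lexicographic tie-break. -/
abbrev Cw (N : ℕ) := ℤ ×ₗ Lex (Fin N →₀ ℕ)

/-- The degree function: weight together with the monomial itself (for injectivity). -/
noncomputable def Dw (w : Fin N → ℤ) (m : Fin N →₀ ℕ) : Cw N :=
  toLex (∑ i, (m i : ℤ) * w i, toLex m)

lemma Dw_add (w : Fin N → ℤ) (x y : Fin N →₀ ℕ) : Dw w (x + y) = Dw w x + Dw w y := by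
  unfold Dw
  show toLex _ = toLex ((∑ i, (x i : ℤ) * w i, toLex x) + (∑ i, (y i : ℤ) * w i, toLex y))
  refine congrArg toLex (Prod.ext ?_ ?_)
  · show (∑ i, ((x + y) i : ℤ) * w i) = (∑ i, (x i : ℤ) * w i) + ∑ i, (y i : ℤ) * w i
    simp [Finsupp.add_apply, add_mul, Finset.sum_add_distrib]
  · rfl

lemma Dw_inj (w : Fin N → ℤ) : Function.Injective (Dw w) := by
  intro x y h
  unfold Dw at h
  have h2 := congrArg (fun z => (ofLex z).2) h
  simpa using congrArg ofLex h2

lemma Dw_ltr (w : Fin N → ℤ) : ∀ x y z : Cw N, x < y → x + z < y + z := by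
  intro x y z h
  rcases Prod.Lex.lt_iff.1 h with h1 | ⟨h1, h2⟩
  · exact Prod.Lex.lt_iff.2 (Or.inl (add_lt_add_left h1 (ofLex z).1))
  · exact Prod.Lex.lt_iff.2
      (Or.inr ⟨congrArg (· + (ofLex z).1) h1, add_lt_add_left h2 (ofLex z).2⟩)

lemma Dw_ltl (w : Fin N → ℤ) : ∀ x y z : Cw N, x < y → z + x < z + y := by
  intro x y z h
  rcases Prod.Lex.lt_iff.1 h with h1 | ⟨h1, h2⟩
  · exact Prod.Lex.lt_iff.2 (Or.inl (add_lt_add_right h1 (ofLex z).1))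
  · exact Prod.Lex.lt_iff.2
      (Or.inr ⟨congrArg ((ofLex z).1 + ·) h1, add_lt_add_right h2 (ofLex z).2⟩)

lemma Dw_lt_of_wt {w : Fin N → ℤ} {x y : Fin N →₀ ℕ}
    (h : ∑ i, (x i : ℤ) * w i < ∑ i, (y i : ℤ) * w i) : Dw w x < Dw w y :=
  Prod.Lex.lt_iff.2 (Or.inl h)

/-- If `p q ≠ 0` over `ℤ`, and `D` is an injective additive "degree" into a linear order
with strictly monotone addition, then leading monomials multiply: there are `a` (the max
monomial of `p`) and `b` with `a + b` the max monomial of `p*q`. -/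
lemma key_max {C : Type*} [LinearOrder C] [Add C]
    (D : (Fin N →₀ ℕ) → C) (hD : Function.Injective D)
    (hadd : ∀ x y, D (x + y) = D x + D y)
    (hltr : ∀ x y z : C, x < y → x + z < y + z)
    (hltl : ∀ x y z : C, x < y → z + x < z + y)
    {p q : MvPolynomial (Fin N) ℤ} (hp : p ≠ 0) (hq : q ≠ 0) :
    ∃ a b, a ∈ p.support ∧ (∀ m ∈ p.support, D m ≤ D a) ∧
      (a + b) ∈ (p * q).support ∧ (∀ m ∈ (p * q).support, D m ≤ D (a + b)) := by
  have hler : ∀ x y z : C, x ≤ y → x + z ≤ y + z := by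
    intro x y z h
    rcases h.lt_or_eq with h | h
    · exact (hltr x y z h).le
    · rw [h]
  have hlel : ∀ x y z : C, x ≤ y → z + x ≤ z + y := by
    intro x y z h
    rcases h.lt_or_eq with h | h
    · exact (hltl x y z h).le
    · rw [h]
  obtain ⟨a, haS, hamax⟩ := Finset.exists_max_image p.support D
    (Finset.nonempty_iff_ne_empty.2 fun h => hp (MvPolynomial.support_eq_empty.mp h))
  obtain ⟨b, hbS, hbmax⟩ := Finset.exists_max_image q.support D
    (Finset.nonempty_iff_ne_empty.2 fun h => hq (MvPolynomial.support_eq_empty.mp h))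
  have hco : coeff (a + b) (p * q) = coeff a p * coeff b q := by
    rw [coeff_mul]
    refine Finset.sum_eq_single_of_mem (a, b) (Finset.HasAntidiagonal.mem_antidiagonal.2 rfl) ?_
    intro x hx hne
    have hxab : x.1 + x.2 = a + b := Finset.HasAntidiagonal.mem_antidiagonal.1 hx
    by_contra h
    have h1 : coeff x.1 p ≠ 0 := fun h0 => h (by rw [h0, zero_mul])
    have h2 : coeff x.2 q ≠ 0 := fun h0 => h (by rw [h0, mul_zero])
    have hx1 : D x.1 ≤ D a := hamax _ (mem_support_iff.2 h1)
    have hx2 : D x.2 ≤ D b := hbmax _ (mem_support_iff.2 h2)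
    rcases hx1.lt_or_eq with hlt | heq
    · have : D x.1 + D x.2 < D a + D b :=
        lt_of_lt_of_le (hltr _ _ _ hlt) (hlel _ _ _ hx2)
      rw [← hadd, ← hadd, hxab] at this
      exact lt_irrefl _ this
    · have hxa : x.1 = a := hD heq
      have hxb : x.2 = b := by
        have := hxab
        rw [hxa] at this
        exact add_left_cancel this
      exact hne (Prod.ext hxa hxb)
  have hmem : (a + b) ∈ (p * q).support := by
    rw [mem_support_iff, hco]
    exact mul_ne_zero (mem_support_iff.1 haS) (mem_support_iff.1 hbS)
  refine ⟨a, b, haS, hamax, hmem, ?_⟩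
  intro m hm
  rw [mem_support_iff, coeff_mul] at hm
  obtain ⟨x, hx, hxne⟩ := Finset.exists_ne_zero_of_sum_ne_zero hm
  have hxm : x.1 + x.2 = m := Finset.HasAntidiagonal.mem_antidiagonal.1 hx
  have h1 : coeff x.1 p ≠ 0 := fun h0 => hxne (by rw [h0, zero_mul])
  have h2 : coeff x.2 q ≠ 0 := fun h0 => hxne (by rw [h0, mul_zero])
  calc D m = D x.1 + D x.2 := by rw [← hxm, hadd]
    _ ≤ D a + D x.2 := hler _ _ _ (hamax _ (mem_support_iff.2 h1))
    _ ≤ D a + D b := hlel _ _ _ (hbmax _ (mem_support_iff.2 h2))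
    _ = D (a + b) := (hadd a b).symm

end Auxiliary

/-- if `d, d' ∈ ℕ^N` are nonzero and not proportional (i.e.
`d' ≠ q·d` for every rational `q`), then every common divisor of `b_d = 1 - X^d` and
`b_{d'} = 1 - X^{d'}` in `ℤ[x₁,…,x_N]` is a unit. -/
theorem distinct_root_binomials_coprime
    {N : ℕ} (d d' : Fin N → ℕ) (hd : d ≠ 0) (hd' : d' ≠ 0)
    (hprop : ∀ q : ℚ, (fun i => (d' i : ℚ)) ≠ fun i => q * (d i : ℚ)) :
    ∀ p : MvPolynomial (Fin N) ℤ, p ∣ bd d → p ∣ bd d' → IsUnit p := by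
  intro p hp1 hp2
  obtain ⟨a, ha⟩ := hp1
  obtain ⟨b, hb⟩ := hp2
  obtain ⟨w, hw1, hw2⟩ := exists_weight d d' hd hd' hprop
  set dd : Fin N →₀ ℕ := Finsupp.equivFunOnFinite.symm d with hdd_def
  set dd' : Fin N →₀ ℕ := Finsupp.equivFunOnFinite.symm d' with hdd'_def
  have hdd0 : dd ≠ 0 := by
    obtain ⟨i, hi⟩ : ∃ i, d i ≠ 0 := by
      by_contra h0; push_neg at h0; exact hd (funext h0)
    intro h
    exact hi (by rw [show d i = dd i from rfl, h]; rfl)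
  have hdd'0 : dd' ≠ 0 := by
    obtain ⟨i, hi⟩ : ∃ i, d' i ≠ 0 := by
      by_contra h0; push_neg at h0; exact hd' (funext h0)
    intro h
    exact hi (by rw [show d' i = dd' i from rfl, h]; rfl)
  -- coefficients of bd at 0
  have hbd0 : coeff 0 (bd d) = 1 := by
    rw [coeff_bd]
    rw [if_pos rfl, if_neg (by rw [← hdd_def]; exact hdd0), sub_zero]
  have hbd'0 : coeff 0 (bd d') = 1 := by
    rw [coeff_bd]
    rw [if_pos rfl, if_neg (by rw [← hdd'_def]; exact hdd'0), sub_zero]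
  -- supports of bd
  have hsupp : ∀ m ∈ (bd d).support, m = 0 ∨ m = dd := by
    intro m hm
    rw [mem_support_iff, coeff_bd, ← hdd_def] at hm
    by_contra hc
    push_neg at hc
    rw [if_neg (fun h => hc.1 h.symm), if_neg (fun h => hc.2 h.symm), sub_zero] at hm
    exact hm rfl
  have hsupp' : ∀ m ∈ (bd d').support, m = 0 ∨ m = dd' := by
    intro m hm
    rw [mem_support_iff, coeff_bd, ← hdd'_def] at hm
    by_contra hc
    push_neg at hc
    rw [if_neg (fun h => hc.1 h.symm), if_neg (fun h => hc.2 h.symm), sub_zero] at hm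
    exact hm rfl
  have h0S : (0 : Fin N →₀ ℕ) ∈ (bd d).support :=
    mem_support_iff.2 (by rw [hbd0]; exact one_ne_zero)
  have h0S' : (0 : Fin N →₀ ℕ) ∈ (bd d').support :=
    mem_support_iff.2 (by rw [hbd'0]; exact one_ne_zero)
  -- nonvanishing
  have hbdne : bd d ≠ 0 := fun h => by
    rw [h] at hbd0; simp at hbd0
  have hbd'ne : bd d' ≠ 0 := fun h => by
    rw [h] at hbd'0; simp at hbd'0
  have hpne : p ≠ 0 := fun h => hbdne (by rw [ha, h, zero_mul])
  have hane : a ≠ 0 := fun h => hbdne (by rw [ha, h, mul_zero])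
  have hbne : b ≠ 0 := fun h => hbd'ne (by rw [hb, h, mul_zero])
  -- weight facts
  have hwt0 : (∑ i, ((0 : Fin N →₀ ℕ) i : ℤ) * w i) = 0 := by simp
  have hwt_dd : (∑ i, (dd i : ℤ) * w i) = ∑ i, (d i : ℤ) * w i := rfl
  have hwt_dd' : (∑ i, (dd' i : ℤ) * w i) = ∑ i, (d' i : ℤ) * w i := rfl
  have hlt_dd : Dw w 0 < Dw w dd := Dw_lt_of_wt (by rw [hwt0, hwt_dd]; exact hw1)
  have hlt_dd' : Dw w dd' < Dw w 0 := Dw_lt_of_wt (by rw [hwt0, hwt_dd']; exact hw2)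
  -- Step 1: the maximal monomial of p is 0 (using bd d').
  obtain ⟨a1, b1, -, ha1max, hmem1, hmax1⟩ :=
    key_max (Dw w) (Dw_inj w) (Dw_add w) (Dw_ltr w) (Dw_ltl w) hpne hbne
  rw [← hb] at hmem1 hmax1
  have hab1 : a1 + b1 = 0 := by
    rcases hsupp' _ hmem1 with h | h
    · exact h
    · exfalso
      have := hmax1 0 h0S'
      rw [h] at this
      exact absurd this (not_le.2 hlt_dd')
  have ha1 : a1 = 0 := by
    ext i
    have := congrArg (fun f : Fin N →₀ ℕ => f i) hab1
    simp only [Finsupp.add_apply, Finsupp.coe_zero, Pi.zero_apply, Finsupp.zero_apply] at this ⊢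
    omega
  rw [ha1] at ha1max
  -- Step 2: the minimal monomial of p is 0 (using bd d and the dual order).
  obtain ⟨a2, b2, -, ha2max, hmem2, hmax2⟩ :=
    key_max (C := (Cw N)ᵒᵈ) (fun m => OrderDual.toDual (Dw w m))
      (fun x y h => Dw_inj w h)
      (fun x y => congrArg OrderDual.toDual (Dw_add w x y))
      (fun x y z h => Dw_ltr w (OrderDual.ofDual y) (OrderDual.ofDual x) (OrderDual.ofDual z) h)
      (fun x y z h => Dw_ltl w (OrderDual.ofDual y) (OrderDual.ofDual x) (OrderDual.ofDual z) h)
      hpne hane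
  rw [← ha] at hmem2 hmax2
  have hab2 : a2 + b2 = 0 := by
    rcases hsupp _ hmem2 with h | h
    · exact h
    · exfalso
      have := hmax2 0 h0S
      rw [h] at this
      exact absurd this (not_le.2 hlt_dd)
  have ha2 : a2 = 0 := by
    ext i
    have := congrArg (fun f : Fin N →₀ ℕ => f i) hab2
    simp only [Finsupp.add_apply, Finsupp.coe_zero, Pi.zero_apply, Finsupp.zero_apply] at this ⊢
    omega
  rw [ha2] at ha2max
  -- combine: support p ⊆ {0}
  have hsuppP : ∀ m ∈ p.support, m = 0 := by
    intro m hm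
    have h1 : Dw w m ≤ Dw w 0 := ha1max m hm
    have h2 : Dw w 0 ≤ Dw w m := ha2max m hm
    exact Dw_inj w (le_antisymm h1 h2)
  -- p is a constant
  have hpC : p = C (coeff 0 p) := by
    ext m
    rcases eq_or_ne m 0 with rfl | hm
    · rw [coeff_C, if_pos rfl]
    · rw [coeff_C, if_neg (fun h => hm h.symm)]
      by_contra hc
      exact hm (hsuppP m (mem_support_iff.2 hc))
  -- the constant is a unit
  have hunit : IsUnit (coeff 0 p) := by
    have h := congrArg (coeff 0) ha
    rw [hbd0, hpC, coeff_C_mul] at h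
    exact IsUnit.of_mul_eq_one _ h.symm
  rw [hpC]
  exact hunit.map C
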